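/- Fix integers 1 ≤ k ≤ n ≤ m. Let x = (x₁,…,x_k) ∈ ℤ^k with x₁ ≥ x₂ ≥ … ≥ x_k and x₁ ≤ 1. Then the weight ζ(x) is dominant, its atypical matching is M(ζ(x)) = {(m−k+t, m+k+1−t) : t = 1,…,k}, so atyp(ζ(x)) = k, and its core equals the pair of multisets ({2m−k, 2m−k−2, …, k+2}, {2m−k+2, 2m−k+4, …, 2m+2n−3k}). -/

import Mathlib

/-- The Weyl vector `ρ = (m, m−1, …, 1, −1, −2, …, −n)` for `gl(m|n)` (0-indexed). -/
def rho (m n : ℕ) : Fin (m + n) → ℤ := fun i =>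
  if (i : ℕ) < m then (m : ℤ) - (i : ℕ) else -(((i : ℕ) : ℤ) + 1 - m)

/-- A weight `λ ∈ ℤ^{m+n}` is dominant if its first `m` coordinates are weakly decreasing
and its last `n` coordinates are weakly decreasing. -/
def Dominant (m n : ℕ) (lam : Fin (m + n) → ℤ) : Prop :=
  ∀ i j : Fin (m + n), (i : ℕ) < (j : ℕ) → ((j : ℕ) < m ∨ m ≤ (i : ℕ)) → lam j ≤ lam i

/-- The atypical matching `M(λ)`. -/
def matching (m n : ℕ) (lam : Fin (m + n) → ℤ) : Set (Fin (m + n) × Fin (m + n)) :=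
  {p | (p.1 : ℕ) < m ∧ m ≤ (p.2 : ℕ) ∧
    (lam p.1 + rho m n p.1) + (lam p.2 + rho m n p.2) = 0}

/-- The core of a weight `λ`: the multiset of values `(λ+ρ)_i` over indices `i ≤ m` (1-based)
that are not first coordinates of pairs of `M(λ)`, together with the multiset of values
`−(λ+ρ)_j` over indices `j > m` that are not second coordinates of pairs of `M(λ)`. -/
noncomputable def core (m n : ℕ) (lam : Fin (m + n) → ℤ) : Multiset ℤ × Multiset ℤ :=
  ((@Finset.filter _
      (fun i : Fin (m + n) => (i : ℕ) < m ∧ ∀ p ∈ matching m n lam, p.1 ≠ i)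
      (Classical.decPred _) Finset.univ).val.map (fun i => lam i + rho m n i),
   (@Finset.filter _
      (fun j : Fin (m + n) => m ≤ (j : ℕ) ∧ ∀ p ∈ matching m n lam, p.2 ≠ j)
      (Classical.decPred _) Finset.univ).val.map (fun j => -(lam j + rho m n j)))

/-- The weight `ζ(x₁,…,x_k) = (p, p−1, …, 1, x₁, …, x_k, −x_k, …, −x₁,
−(q+1), …, −(q+n−k))` with `p = m−k`, `q = 2m−2k` (0-indexed). -/
def zeta (m n k : ℕ) (x : Fin k → ℤ) : Fin (m + n) → ℤ := fun i =>
  if h1 : (i : ℕ) < m - k then ((m - k - (i : ℕ) : ℕ) : ℤ)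
  else if h2 : (i : ℕ) < m then x ⟨(i : ℕ) - (m - k), by omega⟩
  else if h3 : (i : ℕ) < m + k then -(x ⟨k - 1 - ((i : ℕ) - m), by omega⟩)
  else -(2 * (m : ℤ) - 2 * (k : ℤ) + (((i : ℕ) - (m + k) : ℕ) : ℤ) + 1)

/-! ### Auxiliary lemmas -/

section Aux

/-- Shift embedding `Fin d ↪ Fin N`, `a ↦ c + a`. -/
def shiftEmb (N c d : ℕ) (h : c + d ≤ N) : Fin d ↪ Fin N :=
  ⟨fun a => ⟨c + (a : ℕ), by have := a.isLt; omega⟩, fun a b hab => by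
    apply Fin.ext
    have h2 : c + (a : ℕ) = c + (b : ℕ) := congrArg Fin.val hab
    omega⟩

lemma multiset_range_eq_univ (c : ℕ) :
    Multiset.range c = (Finset.univ : Finset (Fin c)).val.map Fin.val := by
  rw [Fin.univ_val_map, List.ofFn_eq_map, List.map_coe_finRange_eq_range]
  rfl

lemma univ_val_map_comp {α : Type*} (c : ℕ) (g : ℕ → α) :
    ((Finset.univ : Finset (Fin c)).val.map (fun i => g i.val)) = (Multiset.range c).map g := by
  rw [multiset_range_eq_univ, Multiset.map_map]
  rfl

lemma core_component_eq {N c : ℕ} (e : Fin c ↪ Fin N) (P : Fin N → Prop) [DecidablePred P]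
    (h : ∀ i : Fin N, P i ↔ ∃ a : Fin c, e a = i) (f : Fin N → ℤ) (g : ℕ → ℤ)
    (hf : ∀ a : Fin c, f (e a) = g (a : ℕ)) :
    (Finset.filter P Finset.univ).val.map f = (Multiset.range c).map g := by
  have h1 : Finset.filter P Finset.univ = Finset.map e Finset.univ := by
    ext i
    simp only [Finset.mem_filter, Finset.mem_univ, true_and, Finset.mem_map, h i]
  rw [h1, Finset.map_val, Multiset.map_map, ← univ_val_map_comp c g]
  exact Multiset.map_congr rfl (fun a _ => hf a)

/-! Value lemmas for `zeta`. -/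

lemma zeval1 (m n k : ℕ) (x : Fin k → ℤ) (i : Fin (m + n)) (h : (i : ℕ) < m - k) :
    zeta m n k x i = ((m - k - (i : ℕ) : ℕ) : ℤ) := by
  simp only [zeta]
  rw [dif_pos h]

lemma zeval2 (m n k : ℕ) (x : Fin k → ℤ) (i : Fin (m + n)) (h1 : m - k ≤ (i : ℕ))
    (h2 : (i : ℕ) < m) (S : Fin k) (hS : (S : ℕ) = (i : ℕ) - (m - k)) :
    zeta m n k x i = x S := by
  simp only [zeta]
  rw [dif_neg (show ¬((i : ℕ) < m - k) by omega), dif_pos h2]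
  exact congrArg x (Fin.ext hS.symm)

lemma zeval3 (m n k : ℕ) (x : Fin k → ℤ) (i : Fin (m + n)) (h1 : m ≤ (i : ℕ))
    (h2 : (i : ℕ) < m + k) (T : Fin k) (hT : (T : ℕ) = k - 1 - ((i : ℕ) - m)) :
    zeta m n k x i = -(x T) := by
  simp only [zeta]
  rw [dif_neg (show ¬((i : ℕ) < m - k) by omega), dif_neg (show ¬((i : ℕ) < m) by omega),
    dif_pos h2]
  exact congrArg (fun a : ℤ => -a) (congrArg x (Fin.ext hT.symm))

lemma zeval4 (m n k : ℕ) (x : Fin k → ℤ) (i : Fin (m + n)) (h : m + k ≤ (i : ℕ)) :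
    zeta m n k x i = -(2 * (m : ℤ) - 2 * (k : ℤ) + (((i : ℕ) - (m + k) : ℕ) : ℤ) + 1) := by
  simp only [zeta]
  rw [dif_neg (show ¬((i : ℕ) < m - k) by omega), dif_neg (show ¬((i : ℕ) < m) by omega),
    dif_neg (show ¬((i : ℕ) < m + k) by omega)]

/-! Value lemmas for `zeta + rho`. -/

lemma zr1 (m n k : ℕ) (x : Fin k → ℤ) (i : Fin (m + n)) (h : (i : ℕ) < m - k) :
    zeta m n k x i + rho m n i = 2 * (m : ℤ) - (k : ℤ) - 2 * ((i : ℕ) : ℤ) := by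
  rw [zeval1 m n k x i h]
  simp only [rho]
  rw [if_pos (show (i : ℕ) < m by omega)]
  omega

lemma zr2 (m n k : ℕ) (hkn : k ≤ n) (hnm : n ≤ m) (x : Fin k → ℤ) (i : Fin (m + n))
    (h1 : m - k ≤ (i : ℕ)) (h2 : (i : ℕ) < m) (S : Fin k) (hS : (S : ℕ) = (i : ℕ) - (m - k)) :
    zeta m n k x i + rho m n i = x S + ((k : ℤ) - ((S : ℕ) : ℤ)) := by
  rw [zeval2 m n k x i h1 h2 S hS]
  simp only [rho]
  rw [if_pos h2]
  have hkm : k ≤ m := le_trans hkn hnm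
  have : (m : ℤ) - ((i : ℕ) : ℤ) = (k : ℤ) - ((S : ℕ) : ℤ) := by omega
  rw [this]

lemma zr3 (m n k : ℕ) (hkn : k ≤ n) (hnm : n ≤ m) (x : Fin k → ℤ) (i : Fin (m + n))
    (h1 : m ≤ (i : ℕ)) (h2 : (i : ℕ) < m + k) (T : Fin k) (hT : (T : ℕ) = k - 1 - ((i : ℕ) - m)) :
    zeta m n k x i + rho m n i = -(x T) - ((k : ℤ) - ((T : ℕ) : ℤ)) := by
  rw [zeval3 m n k x i h1 h2 T hT]
  simp only [rho]
  rw [if_neg (show ¬((i : ℕ) < m) by omega)]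
  have htk := T.isLt
  have : -(((i : ℕ) : ℤ) + 1 - (m : ℤ)) = -((k : ℤ) - ((T : ℕ) : ℤ)) := by omega
  rw [this]
  ring

lemma zr4 (m n k : ℕ) (x : Fin k → ℤ) (i : Fin (m + n)) (h : m + k ≤ (i : ℕ)) :
    zeta m n k x i + rho m n i = -(2 * ((i : ℕ) : ℤ) - 3 * (k : ℤ) + 2) := by
  rw [zeval4 m n k x i h]
  simp only [rho]
  rw [if_neg (show ¬((i : ℕ) < m) by omega)]
  omega

end Aux

/-- For `1 ≤ k ≤ n ≤ m` and `x ∈ ℤ^k` weakly decreasing with `x₁ ≤ 1`, the weight `ζ(x)` is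
dominant, its atypical matching consists of the pairs `(m−k+t, m+k+1−t)`, `t = 1,…,k`
(written 0-indexed), its atypicality is `k`, and its core is
`({2m−k, 2m−k−2, …, k+2}, {2m−k+2, 2m−k+4, …, 2m+2n−3k})`. -/
theorem zeta_dominant_atypicality_core (m n k : ℕ) (hk : 1 ≤ k) (hkn : k ≤ n) (hnm : n ≤ m)
    (x : Fin k → ℤ) (hdec : ∀ i j : Fin k, i ≤ j → x j ≤ x i)
    (hx1 : ∀ i : Fin k, (i : ℕ) = 0 → x i ≤ 1) :
    Dominant m n (zeta m n k x) ∧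
    matching m n (zeta m n k x) =
      {p : Fin (m + n) × Fin (m + n) | ∃ t : Fin k,
        (p.1 : ℕ) = m - k + (t : ℕ) ∧ (p.2 : ℕ) = m + k - 1 - (t : ℕ)} ∧
    (matching m n (zeta m n k x)).ncard = k ∧
    core m n (zeta m n k x) =
      ((Multiset.range (m - k)).map (fun i : ℕ => 2 * (m : ℤ) - (k : ℤ) - 2 * (i : ℤ)),
       (Multiset.range (n - k)).map (fun s : ℕ => 2 * (m : ℤ) - (k : ℤ) + 2 + 2 * (s : ℤ))) := by
  have hkm : k ≤ m := le_trans hkn hnm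
  -- every entry of x is ≤ 1
  have hx1' : ∀ t : Fin k, x t ≤ 1 := fun t =>
    le_trans (hdec ⟨0, hk⟩ t (Fin.le_def.mpr (Nat.zero_le _))) (hx1 ⟨0, hk⟩ rfl)
  -- strict injectivity of t ↦ x t − t
  have hinj : ∀ s t : Fin k, x s - ((s : ℕ) : ℤ) = x t - ((t : ℕ) : ℤ) → (s : ℕ) = (t : ℕ) := by
    intro s t h
    rcases Nat.lt_trichotomy (s : ℕ) (t : ℕ) with hlt | he | hgt
    · have h2 := hdec s t (Fin.le_def.mpr hlt.le)
      have h3 : ((s : ℕ) : ℤ) < ((t : ℕ) : ℤ) := by exact_mod_cast hlt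
      linarith
    · exact he
    · have h2 := hdec t s (Fin.le_def.mpr hgt.le)
      have h3 : ((t : ℕ) : ℤ) < ((s : ℕ) : ℤ) := by exact_mod_cast hgt
      linarith
  -- the matching
  have hM : matching m n (zeta m n k x) =
      {p : Fin (m + n) × Fin (m + n) | ∃ t : Fin k,
        (p.1 : ℕ) = m - k + (t : ℕ) ∧ (p.2 : ℕ) = m + k - 1 - (t : ℕ)} := by
    ext p
    simp only [matching, Set.mem_setOf_eq]
    constructor
    · rintro ⟨h1, h2, h3⟩
      by_cases c2 : (p.2 : ℕ) < m + k
      · obtain ⟨T, hT⟩ : ∃ T : Fin k, (T : ℕ) = k - 1 - ((p.2 : ℕ) - m) :=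
          ⟨⟨_, by omega⟩, rfl⟩
        rw [zr3 m n k hkn hnm x p.2 h2 c2 T hT] at h3
        have hTk := T.isLt
        by_cases c1 : (p.1 : ℕ) < m - k
        · exfalso
          rw [zr1 m n k x p.1 c1] at h3
          obtain ⟨a, ha⟩ : ∃ a, x T = a := ⟨_, rfl⟩
          rw [ha] at h3
          have hb : a ≤ 1 := ha ▸ hx1' T
          omega
        · obtain ⟨S, hS⟩ : ∃ S : Fin k, (S : ℕ) = (p.1 : ℕ) - (m - k) :=
            ⟨⟨_, by omega⟩, rfl⟩
          rw [zr2 m n k hkn hnm x p.1 (by omega) h1 S hS] at h3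
          have hst : (S : ℕ) = (T : ℕ) := hinj S T (by linarith)
          refine ⟨S, ?_, ?_⟩
          · omega
          · omega
      · exfalso
        rw [zr4 m n k x p.2 (by omega)] at h3
        by_cases c1 : (p.1 : ℕ) < m - k
        · rw [zr1 m n k x p.1 c1] at h3
          omega
        · obtain ⟨S, hS⟩ : ∃ S : Fin k, (S : ℕ) = (p.1 : ℕ) - (m - k) :=
            ⟨⟨_, by omega⟩, rfl⟩
          rw [zr2 m n k hkn hnm x p.1 (by omega) h1 S hS] at h3
          have hSk := S.isLt
          obtain ⟨a, ha⟩ : ∃ a, x S = a := ⟨_, rfl⟩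
          rw [ha] at h3
          have hb : a ≤ 1 := ha ▸ hx1' S
          omega
    · rintro ⟨t, ht1, ht2⟩
      have htk := t.isLt
      have h1 : (p.1 : ℕ) < m := by omega
      have h2 : m ≤ (p.2 : ℕ) := by omega
      refine ⟨h1, h2, ?_⟩
      rw [zr2 m n k hkn hnm x p.1 (by omega) h1 t (by omega),
        zr3 m n k hkn hnm x p.2 h2 (by omega) t (by omega)]
      ring
  -- cardinality
  have hcard : (matching m n (zeta m n k x)).ncard = k := by
    have himg : matching m n (zeta m n k x) =
        (fun t : Fin k => ((⟨m - k + (t : ℕ), by have := t.isLt; omega⟩ : Fin (m + n)),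
          (⟨m + k - 1 - (t : ℕ), by have := t.isLt; omega⟩ : Fin (m + n)))) '' Set.univ := by
      rw [hM, Set.image_univ]
      ext p
      simp only [Set.mem_setOf_eq, Set.mem_range]
      constructor
      · rintro ⟨t, h1, h2⟩
        exact ⟨t, Prod.ext_iff.mpr ⟨Fin.ext h1.symm, Fin.ext h2.symm⟩⟩
      · rintro ⟨t, rfl⟩
        exact ⟨t, rfl, rfl⟩
    rw [himg, Set.ncard_image_of_injective _ ?_, Set.ncard_univ, Nat.card_eq_fintype_card,
      Fintype.card_fin]
    intro a b hab
    have h2 : m - k + (a : ℕ) = m - k + (b : ℕ) :=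
      congrArg (fun q : Fin (m + n) × Fin (m + n) => (q.1 : ℕ)) hab
    exact Fin.ext (by omega)
  refine ⟨?_, hM, hcard, ?_⟩
  -- dominance
  · intro i j hij hcond
    rcases hcond with hjm | hmi
    · by_cases c1 : (j : ℕ) < m - k
      · rw [zeval1 m n k x j c1, zeval1 m n k x i (by omega)]
        omega
      · by_cases c2 : (i : ℕ) < m - k
        · rw [zeval1 m n k x i c2,
            zeval2 m n k x j (by omega) hjm ⟨(j : ℕ) - (m - k), by omega⟩ rfl]
          exact le_trans (hx1' _) (by omega)
        · rw [zeval2 m n k x j (by omega) hjm ⟨(j : ℕ) - (m - k), by omega⟩ rfl,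
            zeval2 m n k x i (by omega) (by omega) ⟨(i : ℕ) - (m - k), by omega⟩ rfl]
          exact hdec _ _ (Fin.mk_le_mk.mpr (by omega))
    · have hjn := j.isLt
      by_cases cj : (j : ℕ) < m + k
      · rw [zeval3 m n k x j (by omega) cj ⟨k - 1 - ((j : ℕ) - m), by omega⟩ rfl,
          zeval3 m n k x i hmi (by omega) ⟨k - 1 - ((i : ℕ) - m), by omega⟩ rfl]
        exact neg_le_neg (hdec _ _ (Fin.mk_le_mk.mpr (by omega)))
      · by_cases ci : (i : ℕ) < m + k
        · rw [zeval4 m n k x j (by omega),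
            zeval3 m n k x i hmi ci ⟨k - 1 - ((i : ℕ) - m), by omega⟩ rfl]
          have hb := hx1' (⟨k - 1 - ((i : ℕ) - m), by omega⟩ : Fin k)
          obtain ⟨a, ha⟩ : ∃ a, x (⟨k - 1 - ((i : ℕ) - m), by omega⟩ : Fin k) = a := ⟨_, rfl⟩
          rw [ha] at hb ⊢
          omega
        · rw [zeval4 m n k x j (by omega), zeval4 m n k x i (by omega)]
          omega
  -- the core
  · simp only [core]
    rw [Prod.mk.injEq]
    constructor
    · refine @core_component_eq _ _ (Fin.castLEEmb (show m - k ≤ m + n by omega)) _ (Classical.decPred _) ?_ _ _ ?_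
      · intro i
        constructor
        · rintro ⟨him, hnot⟩
          have hlt : (i : ℕ) < m - k := by
            by_contra hge
            push_neg at hge
            have htk : (i : ℕ) - (m - k) < k := by omega
            refine hnot (i, ⟨m + k - 1 - ((i : ℕ) - (m - k)), by omega⟩)
              ((Set.ext_iff.mp hM _).mpr ?_) rfl
            exact ⟨⟨(i : ℕ) - (m - k), htk⟩,
              by show (i : ℕ) = m - k + ((i : ℕ) - (m - k)); omega, rfl⟩
          exact ⟨⟨(i : ℕ), hlt⟩, Fin.ext rfl⟩
        · rintro ⟨a, rfl⟩
          have hak := a.isLt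
          have hv : ((Fin.castLEEmb (show m - k ≤ m + n by omega) a : Fin (m + n)) : ℕ)
              = (a : ℕ) := rfl
          constructor
          · rw [hv]; omega
          · intro p hp heq
            rw [hM] at hp
            obtain ⟨t, ht1, ht2⟩ := hp
            have h2 : (p.1 : ℕ) = (a : ℕ) := by rw [heq, hv]
            omega
      · intro a
        have hak := a.isLt
        have hv : ((Fin.castLEEmb (show m - k ≤ m + n by omega) a : Fin (m + n)) : ℕ)
            = (a : ℕ) := rfl
        rw [zr1 m n k x _ (by rw [hv]; omega), hv]
    · have hsub : m + k + (n - k) ≤ m + n := by omega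
      refine @core_component_eq _ _ (shiftEmb (m + n) (m + k) (n - k) hsub) _ (Classical.decPred _) ?_ _ _ ?_
      · intro i
        constructor
        · rintro ⟨him, hnot⟩
          have hge : m + k ≤ (i : ℕ) := by
            by_contra hcon
            push_neg at hcon
            have htk : k - 1 - ((i : ℕ) - m) < k := by omega
            refine hnot (⟨m - k + (k - 1 - ((i : ℕ) - m)), by omega⟩, i)
              ((Set.ext_iff.mp hM _).mpr ?_) rfl
            exact ⟨⟨k - 1 - ((i : ℕ) - m), htk⟩, rfl,
              by show (i : ℕ) = m + k - 1 - (k - 1 - ((i : ℕ) - m)); omega⟩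
          have hiN := i.isLt
          exact ⟨⟨(i : ℕ) - (m + k), by omega⟩,
            Fin.ext (show m + k + ((i : ℕ) - (m + k)) = (i : ℕ) by omega)⟩
        · rintro ⟨a, rfl⟩
          have hak := a.isLt
          have hv : ((shiftEmb (m + n) (m + k) (n - k) hsub a : Fin (m + n)) : ℕ)
              = m + k + (a : ℕ) := rfl
          constructor
          · rw [hv]; omega
          · intro p hp heq
            rw [hM] at hp
            obtain ⟨t, ht1, ht2⟩ := hp
            have htk := t.isLt
            have h2 : (p.2 : ℕ) = m + k + (a : ℕ) := by rw [heq, hv]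
            omega
      · intro a
        have hak := a.isLt
        have hv : ((shiftEmb (m + n) (m + k) (n - k) hsub a : Fin (m + n)) : ℕ)
            = m + k + (a : ℕ) := rfl
        rw [zr4 m n k x _ (by rw [hv]; omega), hv]
        push_cast
        ring
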